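/- arXiv:2012.14407 — 2 statements merged into one kernel-verified Lean document; each statement's English description precedes it below -/
import Mathlib

section
/- Let 𝔇 ⊂ ℝ² be an r-uniformly discrete set, let α > 0 and 0 < β' < α. Then there exists a constant C > 0 (depending on r, α, β') such that for all x, y ∈ ℝ²: ∑_{γ ∈ 𝔇} e^{−α‖x−γ‖} e^{−α‖y−γ‖} ≤ C e^{−β'‖x−y‖}. -/
open MeasureTheory Filter Topology

noncomputable section

abbrev R2 : Type := EuclideanSpace ℝ (Fin 2)

abbrev H2 : Type := MeasureTheory.Lp ℂ 2 (volume : Measure R2)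

/-- `T` is an integral operator with kernel `k`. -/
def HasKernel (T : H2 →L[ℂ] H2) (k : R2 → R2 → ℂ) : Prop :=
  ∀ f : H2, ∀ᵐ x : R2 ∂volume, (T f : R2 → ℂ) x = ∫ y : R2, k x y * (f : R2 → ℂ) y

/-- `P` is an orthogonal projection. -/
def IsOrthProj (P : H2 →L[ℂ] H2) : Prop := IsSelfAdjoint P ∧ P ∘L P = P

/-- `p` is a jointly continuous, exponentially localized kernel with constants `C`, `β`. -/
def IsExpLocKernel (p : R2 → R2 → ℂ) (C β : ℝ) : Prop :=
  Continuous (fun q : R2 × R2 => p q.1 q.2) ∧ 0 < C ∧ 0 < β ∧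
    ∀ x y : R2, ‖p x y‖ ≤ C * Real.exp (-β * ‖x - y‖)

/-- Hilbert-Schmidt operators on `L²(ℝ²)`. -/
def IsHilbertSchmidt (T : H2 →L[ℂ] H2) : Prop :=
  ∃ (w : Set H2) (b : HilbertBasis w ℂ H2), Summable fun i => ‖T (b i)‖ ^ 2

/-- Trace class operators, characterized as products of two Hilbert-Schmidt operators. -/
def IsTraceClass (T : H2 →L[ℂ] H2) : Prop :=
  ∃ A B : H2 →L[ℂ] H2, IsHilbertSchmidt A ∧ IsHilbertSchmidt B ∧ T = A ∘L B

def traceBasisIdx : Set H2 := (exists_hilbertBasis ℂ H2).choose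

def traceBasis : HilbertBasis traceBasisIdx ℂ H2 := (exists_hilbertBasis ℂ H2).choose_spec.choose

/-- The trace of an operator, computed in a fixed Hilbert basis of `L²(ℝ²)`.
For trace class operators this is the canonical trace for any choice of basis. -/
def opTrace (T : H2 →L[ℂ] H2) : ℂ :=
  ∑' i : traceBasisIdx, (inner ℂ (traceBasis i) (T (traceBasis i)) : ℂ)

/-- The square `Λ_L = [-L, L]²` in `ℝ²`. -/
def Lam (L : ℝ) : Set R2 := {x : R2 | |x 0| ≤ L ∧ |x 1| ≤ L}

/-- The characteristic function of `Λ_L`, with values in `ℂ`. -/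
def indL (L : ℝ) (x : R2) : ℂ := (Lam L).indicator (fun _ => (1 : ℂ)) x

/-- Formal composition of two integral kernels. -/
def kComp (k₁ k₂ : R2 → R2 → ℂ) : R2 → R2 → ℂ := fun x y => ∫ z : R2, k₁ x z * k₂ z y

/-- The kernel of the commutator `[X_i, P]`, when `P` has kernel `p`. -/
def commK (p : R2 → R2 → ℂ) (i : Fin 2) : R2 → R2 → ℂ :=
  fun x y => ((x i - y i : ℝ) : ℂ) * p x y

/-- The kernel of the double commutator `[[X₁,P],[X₂,P]]`, when `P` has kernel `p`. -/
def dcommK (p : R2 → R2 → ℂ) : R2 → R2 → ℂ :=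
  fun x y => kComp (commK p 0) (commK p 1) x y - kComp (commK p 1) (commK p 0) x y

/-- The kernel of `i χ_{Λ_L} P [[X₁,P],[X₂,P]] P χ_{Λ_L}`, when `P` has kernel `p`. -/
def chernK (p : R2 → R2 → ℂ) (L : ℝ) : R2 → R2 → ℂ :=
  fun x y => indL L x * (Complex.I * kComp p (kComp (dcommK p) p) x y) * indL L y

/-- A set `𝔇 ⊆ ℝ²` is `r`-uniformly discrete. -/
def UnifDiscrete (𝔇 : Set R2) (r : ℝ) : Prop :=
  0 < r ∧ ∀ x : R2, (𝔇 ∩ Metric.ball x r).Subsingleton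

/-- The index set of a generalized Wannier basis. -/
abbrev WIdx (𝔇 : Set R2) (m : R2 → ℕ) : Type := Σ γ : 𝔇, Fin (m (γ : R2))

/-- `w` is a generalized Wannier basis for `P`, `G`-localized around `𝔇`
with localization constant `M` and uniform multiplicity bound `mStar`. -/
def IsGWB (P : H2 →L[ℂ] H2) (𝔇 : Set R2) (m : R2 → ℕ) (mStar : ℕ)
    (w : (γ : R2) → Fin (m γ) → H2) (G : ℝ → ℝ) (M : ℝ) : Prop :=
  (∀ γ ∈ 𝔇, m γ ≤ mStar) ∧
  Orthonormal ℂ (fun σ : WIdx 𝔇 m => w (σ.1 : R2) σ.2) ∧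
  (∀ γ ∈ 𝔇, ∀ a, P (w γ a) = w γ a) ∧
  (∀ f : H2, P f = f → (∀ (γ : R2), γ ∈ 𝔇 → ∀ a, (inner ℂ (w γ a) f : ℂ) = 0) → f = 0) ∧
  (∀ γ ∈ 𝔇, ∀ a, ∫⁻ x : R2,
      (‖(w γ a : R2 → ℂ) x‖₊ : ENNReal) ^ 2 * ENNReal.ofReal (G ‖x - γ‖)
      ≤ ENNReal.ofReal M)

/-- The Japanese bracket `⟨x⟩ = (1+‖x‖²)^{1/2}` on `ℝ²`. -/
def jap (x : R2) : ℝ := Real.sqrt (1 + ‖x‖ ^ 2)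

/-- The Japanese bracket `⟨t⟩ = (1+t²)^{1/2}` on `ℝ`. -/
def japR (t : ℝ) : ℝ := Real.sqrt (1 + t ^ 2)


lemma aux_summable_exp_abs_int {a : ℝ} (ha : 0 < a) :
    Summable (fun k : ℤ => Real.exp (-a * |(k : ℝ)|)) := by
  have hgeom : Summable (fun n : ℕ => Real.exp (-a) ^ n) :=
    summable_geometric_of_lt_one (Real.exp_pos _).le (Real.exp_lt_one_iff.mpr (by linarith))
  have hnat : Summable (fun n : ℕ => Real.exp (-a * |((n : ℤ) : ℝ)|)) := by
    refine hgeom.congr fun n => ?_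
    rw [← Real.exp_nat_mul]
    congr 1
    push_cast
    rw [abs_of_nonneg (by positivity : (0:ℝ) ≤ (n:ℝ))]
    ring
  refine Summable.of_nat_of_neg hnat (hnat.congr fun n => ?_)
  congr 2
  push_cast
  rw [abs_neg]

lemma aux_1d (c s : ℝ) (hc : 0 < c) (hs : 0 < s) :
    ∃ S : ℝ, 0 < S ∧ ∀ u : ℝ,
      Summable (fun n : ℤ => Real.exp (-c * |u - s * n|)) ∧
      ∑' n : ℤ, Real.exp (-c * |u - s * n|) ≤ S := by
  set S0 : ℝ := ∑' k : ℤ, Real.exp (-(c * s) * |(k : ℝ)|) with hS0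
  have hsum0 : Summable (fun k : ℤ => Real.exp (-(c * s) * |(k : ℝ)|)) :=
    aux_summable_exp_abs_int (by positivity)
  have hS0pos : 0 < S0 := by
    have h := Summable.le_tsum hsum0 0 (fun j _ => (Real.exp_pos _).le)
    simp only [Int.cast_zero, abs_zero, mul_zero, Real.exp_zero] at h
    linarith
  refine ⟨Real.exp (c * s) * S0, by positivity, fun u => ?_⟩
  set m : ℤ := ⌊u / s⌋ with hm
  have h1 : |u / s - (m : ℝ)| ≤ 1 := by
    rw [abs_le, hm]
    constructor
    · linarith [Int.floor_le (u / s)]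
    · linarith [Int.lt_floor_add_one (u / s)]
  have key : ∀ k : ℤ, Real.exp (-c * |u - s * ((k : ℝ) + m)|)
      ≤ Real.exp (c * s) * Real.exp (-(c * s) * |(k : ℝ)|) := by
    intro k
    rw [← Real.exp_add]
    apply Real.exp_le_exp.mpr
    have h2 : s * |(k : ℝ)| - s ≤ |u - s * ((k : ℝ) + m)| := by
      have he : u - s * ((k : ℝ) + m) = s * (u / s - ((k : ℝ) + m)) := by
        field_simp
      rw [he, abs_mul, abs_of_pos hs]
      have h3 : |(k : ℝ)| - 1 ≤ |u / s - ((k : ℝ) + m)| := by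
        have t := abs_add_le (((k : ℝ) + m) - u / s) (u / s - m)
        have he2 : (((k : ℝ) + m) - u / s) + (u / s - m) = (k : ℝ) := by ring
        rw [he2] at t
        have := abs_sub_comm ((k : ℝ) + m) (u / s)
        have := abs_sub_comm (u / s) (m : ℝ)
        linarith
      nlinarith
    nlinarith
  have hsum1 : Summable (fun k : ℤ => Real.exp (-c * |u - s * ((k : ℝ) + m)|)) := by
    apply Summable.of_nonneg_of_le (fun k => (Real.exp_pos _).le) key
    exact hsum0.mul_left _
  have heq : ∑' k : ℤ, Real.exp (-c * |u - s * ((k : ℝ) + m)|)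
      = ∑' n : ℤ, Real.exp (-c * |u - s * n|) := by
    have h := (Equiv.addRight m).tsum_eq (fun n : ℤ => Real.exp (-c * |u - s * n|))
    rw [← h]
    congr 1
    funext k
    simp [Equiv.addRight]
  have hsummain : Summable (fun n : ℤ => Real.exp (-c * |u - s * n|)) := by
    have h := (Equiv.addRight m).summable_iff
      (f := fun n : ℤ => Real.exp (-c * |u - s * n|))
    apply h.mp
    refine hsum1.congr fun k => ?_
    simp [Equiv.addRight]
  refine ⟨hsummain, ?_⟩
  rw [← heq]
  calc ∑' k : ℤ, Real.exp (-c * |u - s * ((k : ℝ) + m)|)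
      ≤ ∑' k : ℤ, Real.exp (c * s) * Real.exp (-(c * s) * |(k : ℝ)|) :=
        Summable.tsum_le_tsum key hsum1 (hsum0.mul_left _)
    _ = Real.exp (c * s) * S0 := tsum_mul_left

lemma aux_coord_le (v : R2) (i : Fin 2) : |v i| ≤ ‖v‖ := by
  rw [EuclideanSpace.norm_eq, ← Real.sqrt_sq_eq_abs]
  apply Real.sqrt_le_sqrt
  rw [Fin.sum_univ_two]
  fin_cases i <;> simp [Real.norm_eq_abs, sq_abs] <;>
    nlinarith [sq_nonneg (v 0), sq_nonneg (v 1)]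

lemma aux_floor_dist {s a b : ℝ} (hs : 0 < s) (h : ⌊a / s⌋ = ⌊b / s⌋) : |a - b| < s := by
  set n := ⌊a / s⌋ with hn
  have h1 : (n : ℝ) ≤ a / s := Int.floor_le (a / s)
  have h2 : a / s < n + 1 := Int.lt_floor_add_one (a / s)
  have h3 : (n : ℝ) ≤ b / s := h ▸ Int.floor_le (b / s)
  have h4 : b / s < n + 1 := by rw [h]; exact Int.lt_floor_add_one (b / s)
  have ha : a = s * (a / s) := by field_simp
  have hb : b = s * (b / s) := by field_simp
  rw [abs_sub_lt_iff]
  constructor <;> nlinarith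

lemma aux_floor_close {s a : ℝ} (hs : 0 < s) : |a - s * (⌊a / s⌋ : ℤ)| ≤ s := by
  have h1 : ((⌊a / s⌋ : ℤ) : ℝ) ≤ a / s := Int.floor_le (a / s)
  have h2 : a / s < (⌊a / s⌋ : ℤ) + 1 := Int.lt_floor_add_one (a / s)
  have ha : a = s * (a / s) := by field_simp
  rw [abs_le]
  constructor <;> nlinarith

set_option maxHeartbeats 1600000 in
lemma aux_2d (𝔇 : Set R2) (r : ℝ) (h𝔇 : UnifDiscrete 𝔇 r) (ε : ℝ) (hε : 0 < ε) :
    ∃ C0 : ℝ, 0 < C0 ∧ ∀ x : R2,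
      Summable (fun γ : 𝔇 => Real.exp (-ε * ‖x - (γ : R2)‖)) ∧
      ∑' γ : 𝔇, Real.exp (-ε * ‖x - (γ : R2)‖) ≤ C0 := by
  obtain ⟨hr, hsep⟩ := h𝔇
  set s := r / 2 with hs_def
  have hs : 0 < s := by positivity
  set c := ε / 2 with hc_def
  have hc : 0 < c := by positivity
  obtain ⟨S, hSpos, hS⟩ := aux_1d c s hc hs
  set ι : 𝔇 → ℤ × ℤ := fun γ => (⌊(γ : R2) 0 / s⌋, ⌊(γ : R2) 1 / s⌋) with hι_def
  have hι : Function.Injective ι := by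
    intro γ γ' h
    have h0 : |(γ : R2) 0 - (γ' : R2) 0| < s := aux_floor_dist hs (congrArg Prod.fst h)
    have h1 : |(γ : R2) 1 - (γ' : R2) 1| < s := aux_floor_dist hs (congrArg Prod.snd h)
    have q0 : ((γ' : R2) 0 - (γ : R2) 0) ^ 2 < s ^ 2 := by
      nlinarith [abs_nonneg ((γ : R2) 0 - (γ' : R2) 0), sq_abs ((γ : R2) 0 - (γ' : R2) 0)]
    have q1 : ((γ' : R2) 1 - (γ : R2) 1) ^ 2 < s ^ 2 := by
      nlinarith [abs_nonneg ((γ : R2) 1 - (γ' : R2) 1), sq_abs ((γ : R2) 1 - (γ' : R2) 1)]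
    have hnorm : ‖(γ' : R2) - (γ : R2)‖ < r := by
      rw [EuclideanSpace.norm_eq, Fin.sum_univ_two]
      have e0 : ((γ' : R2) - (γ : R2)) 0 = (γ' : R2) 0 - (γ : R2) 0 := rfl
      have e1 : ((γ' : R2) - (γ : R2)) 1 = (γ' : R2) 1 - (γ : R2) 1 := rfl
      rw [e0, e1, Real.norm_eq_abs, Real.norm_eq_abs]
      rw [Real.sqrt_lt' hr]
      rw [sq_abs, sq_abs]
      nlinarith
    have hmem : (γ' : R2) ∈ 𝔇 ∩ Metric.ball (γ : R2) r := by
      refine ⟨γ'.2, ?_⟩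
      rw [Metric.mem_ball, dist_eq_norm]
      exact hnorm
    have hmem' : (γ : R2) ∈ 𝔇 ∩ Metric.ball (γ : R2) r :=
      ⟨γ.2, Metric.mem_ball_self hr⟩
    exact Subtype.ext ((hsep (γ : R2) hmem' hmem).symm).symm
  refine ⟨(Real.exp (c * s) * S) * (Real.exp (c * s) * S), by positivity, fun x => ?_⟩
  set F : ℤ → ℝ := fun n => Real.exp (c * s) * Real.exp (-c * |x 0 - s * n|) with hF_def
  set G : ℤ → ℝ := fun n => Real.exp (c * s) * Real.exp (-c * |x 1 - s * n|) with hG_def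
  obtain ⟨hF1, hF2⟩ := hS (x 0)
  obtain ⟨hG1, hG2⟩ := hS (x 1)
  have hFs : Summable F := hF1.mul_left _
  have hGs : Summable G := hG1.mul_left _
  have hFnn : ∀ n, 0 ≤ F n := fun n => by simp only [hF_def]; positivity
  have hGnn : ∀ n, 0 ≤ G n := fun n => by simp only [hG_def]; positivity
  have hg : Summable (fun p : ℤ × ℤ => F p.1 * G p.2) :=
    hFs.mul_of_nonneg hGs hFnn hGnn
  have key : ∀ γ : 𝔇, Real.exp (-ε * ‖x - (γ : R2)‖) ≤ F (ι γ).1 * G (ι γ).2 := by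
    intro γ
    have hx0 : |x 0 - (γ : R2) 0| ≤ ‖x - (γ : R2)‖ := by
      have h := aux_coord_le (x - (γ : R2)) 0
      simpa using h
    have hx1 : |x 1 - (γ : R2) 1| ≤ ‖x - (γ : R2)‖ := by
      have h := aux_coord_le (x - (γ : R2)) 1
      simpa using h
    have hγ0 : |(γ : R2) 0 - s * ((ι γ).1 : ℝ)| ≤ s := aux_floor_close hs
    have hγ1 : |(γ : R2) 1 - s * ((ι γ).2 : ℝ)| ≤ s := aux_floor_close hs
    have ht0 : |x 0 - s * ((ι γ).1 : ℝ)| ≤ |x 0 - (γ : R2) 0| + s := by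
      have := abs_add_le (x 0 - (γ : R2) 0) ((γ : R2) 0 - s * ((ι γ).1 : ℝ))
      have he : (x 0 - (γ : R2) 0) + ((γ : R2) 0 - s * ((ι γ).1 : ℝ))
          = x 0 - s * ((ι γ).1 : ℝ) := by ring
      rw [he] at this
      linarith
    have ht1 : |x 1 - s * ((ι γ).2 : ℝ)| ≤ |x 1 - (γ : R2) 1| + s := by
      have := abs_add_le (x 1 - (γ : R2) 1) ((γ : R2) 1 - s * ((ι γ).2 : ℝ))
      have he : (x 1 - (γ : R2) 1) + ((γ : R2) 1 - s * ((ι γ).2 : ℝ))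
          = x 1 - s * ((ι γ).2 : ℝ) := by ring
      rw [he] at this
      linarith
    have hrhs : F (ι γ).1 * G (ι γ).2
        = Real.exp ((c * s + -c * |x 0 - s * ((ι γ).1 : ℝ)|)
            + (c * s + -c * |x 1 - s * ((ι γ).2 : ℝ)|)) := by
      simp only [hF_def, hG_def]
      rw [← Real.exp_add, ← Real.exp_add, ← Real.exp_add]
    rw [hrhs]
    apply Real.exp_le_exp.mpr
    have hcε : ε = 2 * c := by rw [hc_def]; ring
    nlinarith [abs_nonneg (x 0 - s * ((ι γ).1 : ℝ)), abs_nonneg (x 1 - s * ((ι γ).2 : ℝ))]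
  have hsummand : Summable (fun γ : 𝔇 => Real.exp (-ε * ‖x - (γ : R2)‖)) := by
    apply Summable.of_nonneg_of_le (fun γ => (Real.exp_pos _).le) key
    exact hg.comp_injective hι
  refine ⟨hsummand, ?_⟩
  have hle : ∑' γ : 𝔇, Real.exp (-ε * ‖x - (γ : R2)‖) ≤ ∑' p : ℤ × ℤ, F p.1 * G p.2 :=
    Summable.tsum_le_tsum_of_inj ι hι (fun p _ => mul_nonneg (hFnn _) (hGnn _)) key hsummand hg
  have hprod : ∑' p : ℤ × ℤ, F p.1 * G p.2 = (∑' n, F n) * (∑' n, G n) := by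
    rw [Summable.tsum_prod' hg (fun a => (hGs.mul_left (F a) : Summable fun b => F a * G b))]
    simp_rw [tsum_mul_left, tsum_mul_right]
  have hFle : ∑' n, F n ≤ Real.exp (c * s) * S := by
    simp only [hF_def]
    rw [tsum_mul_left]
    exact mul_le_mul_of_nonneg_left hF2 (Real.exp_pos _).le
  have hGle : ∑' n, G n ≤ Real.exp (c * s) * S := by
    simp only [hG_def]
    rw [tsum_mul_left]
    exact mul_le_mul_of_nonneg_left hG2 (Real.exp_pos _).le
  calc ∑' γ : 𝔇, Real.exp (-ε * ‖x - (γ : R2)‖)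
      ≤ (∑' n, F n) * (∑' n, G n) := by rw [← hprod]; exact hle
    _ ≤ (Real.exp (c * s) * S) * (Real.exp (c * s) * S) := by
        apply mul_le_mul hFle hGle (tsum_nonneg hGnn) (by positivity)

/-- for an `r`-uniformly discrete set `𝔇 ⊆ ℝ²`, `α > 0` and `0 < β' < α`, there
is `C > 0` with `∑_{γ∈𝔇} e^{-α‖x-γ‖} e^{-α‖y-γ‖} ≤ C e^{-β'‖x-y‖}` for all `x, y ∈ ℝ²`. -/
theorem statement_16
    (𝔇 : Set R2) (r : ℝ) (h𝔇 : UnifDiscrete 𝔇 r)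
    (α β' : ℝ) (hα : 0 < α) (hβ'0 : 0 < β') (hβ' : β' < α) :
    ∃ C : ℝ, 0 < C ∧ ∀ x y : R2,
      Summable (fun γ : 𝔇 =>
        Real.exp (-α * ‖x - (γ : R2)‖) * Real.exp (-α * ‖y - (γ : R2)‖)) ∧
      ∑' γ : 𝔇, Real.exp (-α * ‖x - (γ : R2)‖) * Real.exp (-α * ‖y - (γ : R2)‖)
        ≤ C * Real.exp (-β' * ‖x - y‖) := by
  have hε : 0 < α - β' := by linarith
  obtain ⟨C0, hC0, hmain⟩ := aux_2d 𝔇 r h𝔇 (α - β') hε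
  refine ⟨C0, hC0, fun x y => ?_⟩
  obtain ⟨hsum, hbound⟩ := hmain x
  have key : ∀ γ : 𝔇, Real.exp (-α * ‖x - (γ : R2)‖) * Real.exp (-α * ‖y - (γ : R2)‖)
      ≤ Real.exp (-β' * ‖x - y‖) * Real.exp (-(α - β') * ‖x - (γ : R2)‖) := by
    intro γ
    rw [← Real.exp_add, ← Real.exp_add]
    apply Real.exp_le_exp.mpr
    have tri : ‖x - y‖ ≤ ‖x - (γ : R2)‖ + ‖y - (γ : R2)‖ := by
      have h := dist_triangle_right x y (γ : R2)
      simpa [dist_eq_norm] using h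
    nlinarith [mul_le_mul_of_nonneg_left tri hβ'0.le,
      mul_nonneg hε.le (norm_nonneg (y - (γ : R2)))]
  have hsum2 : Summable (fun γ : 𝔇 =>
      Real.exp (-α * ‖x - (γ : R2)‖) * Real.exp (-α * ‖y - (γ : R2)‖)) :=
    Summable.of_nonneg_of_le (fun γ => by positivity) key (hsum.mul_left _)
  refine ⟨hsum2, ?_⟩
  calc ∑' γ : 𝔇, Real.exp (-α * ‖x - (γ : R2)‖) * Real.exp (-α * ‖y - (γ : R2)‖)
      ≤ ∑' γ : 𝔇, Real.exp (-β' * ‖x - y‖) * Real.exp (-(α - β') * ‖x - (γ : R2)‖) :=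
        Summable.tsum_le_tsum key hsum2 (hsum.mul_left _)
    _ = Real.exp (-β' * ‖x - y‖) * ∑' γ : 𝔇, Real.exp (-(α - β') * ‖x - (γ : R2)‖) :=
        tsum_mul_left
    _ ≤ Real.exp (-β' * ‖x - y‖) * C0 :=
        mul_le_mul_of_nonneg_left hbound (Real.exp_pos _).le
    _ = C0 * Real.exp (-β' * ‖x - y‖) := mul_comm _ _


end
end

section
/- Let 𝔇 ⊂ ℝ² be an r-uniformly discrete set, let s > 3/2 and 0 < ε < s − 3/2. Then there exists a constant C > 0 (depending on r, s, ε) such that for all x, y ∈ ℝ²: ∑_{γ ∈ 𝔇} ⟨x−γ⟩^{−(s−1)} ⟨y−γ⟩^{−s} ≤ C ⟨x−y⟩^{−(s−3/2−ε)}. -/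
open MeasureTheory Filter Topology

noncomputable section

lemma one_le_jap (v : R2) : 1 ≤ jap v := by
  rw [jap]
  nlinarith [Real.sq_sqrt (show (0:ℝ) ≤ 1 + ‖v‖^2 by positivity),
    Real.sqrt_nonneg (1 + ‖v‖^2), sq_nonneg ‖v‖,
    sq_nonneg (Real.sqrt (1 + ‖v‖^2) - 1)]

lemma jap_pos (v : R2) : 0 < jap v := lt_of_lt_of_le one_pos (one_le_jap v)

lemma peetre (u v : R2) : jap (u - v) ≤ Real.sqrt 2 * (jap u * jap v) := by
  have h1 : ‖u - v‖ ≤ ‖u‖ + ‖v‖ := norm_sub_le u v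
  have h2 : jap (u - v) ≤ Real.sqrt (1 + (‖u‖ + ‖v‖) ^ 2) := by
    apply Real.sqrt_le_sqrt
    have : 0 ≤ ‖u - v‖ := norm_nonneg _
    nlinarith
  refine h2.trans ?_
  rw [jap, jap, ← Real.sqrt_mul (by positivity : (0:ℝ) ≤ 1 + ‖u‖^2),
    ← Real.sqrt_mul (by norm_num : (0:ℝ) ≤ 2)]
  apply Real.sqrt_le_sqrt
  have a := norm_nonneg u
  have b := norm_nonneg v
  nlinarith [sq_nonneg (‖u‖*‖v‖ - 1), sq_nonneg (‖u‖ - ‖v‖)]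

lemma sep {𝔇 : Set R2} {r : ℝ} (h : UnifDiscrete 𝔇 r) {a b : R2}
    (ha : a ∈ 𝔇) (hb : b ∈ 𝔇) (hne : a ≠ b) : r ≤ dist a b := by
  by_contra hlt
  push_neg at hlt
  exact hne (h.2 a ⟨ha, Metric.mem_ball.2 (by simp [h.1])⟩
    ⟨hb, Metric.mem_ball.2 (by rwa [dist_comm])⟩)

lemma jap_neg_rpow_integrable {t : ℝ} (ht : 2 < t) :
    Integrable (fun z : R2 => jap z ^ (-t)) := by
  have h := integrable_rpow_neg_one_add_norm_sq (E := R2) (μ := volume)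
    (r := t) (by simpa using ht)
  refine h.congr (Eventually.of_forall fun z => ?_)
  simp only [jap]
  rw [Real.sqrt_eq_rpow, ← Real.rpow_mul (by positivity)]
  ring_nf

lemma uniform_sum_bound {𝔇 : Set R2} {r : ℝ} (h𝔇 : UnifDiscrete 𝔇 r)
    {t : ℝ} (ht : 2 < t) :
    ∃ S : ℝ, 0 ≤ S ∧ ∀ x : R2, ∀ F : Finset 𝔇,
      ∑ γ ∈ F, jap (x - (γ : R2)) ^ (-t) ≤ S := by
  obtain ⟨hr, hsub⟩ := h𝔇
  set ρ := r / 2 with hρdef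
  have hρ : 0 < ρ := by positivity
  set V : ℝ := (volume (Metric.ball (0 : R2) ρ)).toReal with hV
  have hVpos : 0 < V := by
    rw [hV]
    exact ENNReal.toReal_pos (Metric.measure_ball_pos volume 0 hρ).ne'
      measure_ball_lt_top.ne
  set c : ℝ := (Real.sqrt 2 * Real.sqrt (1 + ρ ^ 2)) ^ t with hc
  have hcpos : 0 < c := by
    apply Real.rpow_pos_of_pos
    have := Real.sqrt_nonneg (1 + ρ^2)
    nlinarith [Real.sq_sqrt (show (0:ℝ) ≤ 2 by norm_num),
      Real.sq_sqrt (show (0:ℝ) ≤ 1 + ρ^2 by positivity),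
      Real.sqrt_nonneg (2:ℝ), sq_nonneg (Real.sqrt 2 - 1),
      sq_nonneg (Real.sqrt (1+ρ^2) - 1)]
  set I : ℝ := ∫ z : R2, jap z ^ (-t) with hI
  refine ⟨c / V * I, ?_, ?_⟩
  · have hInn : 0 ≤ I := integral_nonneg fun z => Real.rpow_nonneg (jap_pos z).le _
    positivity
  intro x F
  have hint : Integrable (fun z : R2 => jap (x - z) ^ (-t)) := by
    exact (integrable_comp_sub_left (fun z : R2 => jap z ^ (-t)) x).2
      (jap_neg_rpow_integrable ht)
  -- pointwise bound on each ball
  have hball : ∀ γ : 𝔇, jap (x - (γ : R2)) ^ (-t)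
      ≤ (c / V) * ∫ z in Metric.ball (γ : R2) ρ, jap (x - z) ^ (-t) := by
    intro γ
    set K : ℝ := Real.sqrt 2 * Real.sqrt (1 + ρ ^ 2) with hK
    have hKnn : 0 ≤ K := by positivity
    have key : ∀ z ∈ Metric.ball (γ : R2) ρ,
        c⁻¹ * jap (x - (γ : R2)) ^ (-t) ≤ jap (x - z) ^ (-t) := by
      intro z hz
      have h1 : jap (x - z) ≤ K * jap (x - (γ : R2)) := by
        have hp := peetre (x - (γ : R2)) (z - (γ : R2))
        have hxy : (x - (γ : R2)) - (z - (γ : R2)) = x - z := by abel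
        rw [hxy] at hp
        refine hp.trans ?_
        have hj : jap (z - (γ : R2)) ≤ Real.sqrt (1 + ρ ^ 2) := by
          rw [jap]
          apply Real.sqrt_le_sqrt
          have hzd : ‖z - (γ : R2)‖ ≤ ρ := by
            rw [← dist_eq_norm]
            exact (Metric.mem_ball.1 hz).le
          nlinarith [norm_nonneg (z - (γ : R2))]
        have hA := (jap_pos (x - (γ : R2))).le
        have h2 := Real.sqrt_nonneg (2 : ℝ)
        calc Real.sqrt 2 * (jap (x - (γ : R2)) * jap (z - (γ : R2)))
            ≤ Real.sqrt 2 * (jap (x - (γ : R2)) * Real.sqrt (1 + ρ ^ 2)) := by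
              apply mul_le_mul_of_nonneg_left _ h2
              exact mul_le_mul_of_nonneg_left hj hA
          _ = K * jap (x - (γ : R2)) := by ring
      have h2 : (K * jap (x - (γ : R2))) ^ (-t) ≤ jap (x - z) ^ (-t) :=
        Real.rpow_le_rpow_of_nonpos (jap_pos _) h1 (by linarith)
      calc c⁻¹ * jap (x - (γ : R2)) ^ (-t)
          = (K * jap (x - (γ : R2))) ^ (-t) := by
            rw [Real.mul_rpow hKnn (jap_pos _).le, hc, Real.rpow_neg hKnn]
        _ ≤ jap (x - z) ^ (-t) := h2
    have hVγ : (volume (Metric.ball (γ : R2) ρ)).toReal = V := by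
      rw [hV, Measure.addHaar_ball_center]
    have hmono : ∫ z in Metric.ball (γ : R2) ρ, c⁻¹ * jap (x - (γ : R2)) ^ (-t)
        ≤ ∫ z in Metric.ball (γ : R2) ρ, jap (x - z) ^ (-t) := by
      apply setIntegral_mono_on
      · exact integrableOn_const measure_ball_lt_top.ne
      · exact hint.integrableOn
      · exact measurableSet_ball
      · exact key
    rw [setIntegral_const, measureReal_def, hVγ, smul_eq_mul] at hmono
    have hXnn : 0 ≤ jap (x - (γ : R2)) ^ (-t) := Real.rpow_nonneg (jap_pos _).le _
    have := mul_le_mul_of_nonneg_left hmono (le_of_lt (div_pos hcpos hVpos))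
    calc jap (x - (γ : R2)) ^ (-t)
        = c / V * (V * (c⁻¹ * jap (x - (γ : R2)) ^ (-t))) := by
          field_simp
        _ ≤ c / V * ∫ z in Metric.ball (γ : R2) ρ, jap (x - z) ^ (-t) := this
  -- sum over F
  have hdisj : (↑F : Set 𝔇).Pairwise
      (Function.onFun Disjoint fun γ : 𝔇 => Metric.ball (γ : R2) ρ) := by
    intro γ₁ _ γ₂ _ hne
    apply Metric.ball_disjoint_ball
    have : r ≤ dist (γ₁ : R2) (γ₂ : R2) :=
      sep ⟨hr, hsub⟩ γ₁.2 γ₂.2 (fun h => hne (Subtype.ext h))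
    linarith [this]
  calc ∑ γ ∈ F, jap (x - (γ : R2)) ^ (-t)
      ≤ ∑ γ ∈ F, (c / V) * ∫ z in Metric.ball (γ : R2) ρ, jap (x - z) ^ (-t) :=
        Finset.sum_le_sum fun γ _ => hball γ
    _ = (c / V) * ∑ γ ∈ F, ∫ z in Metric.ball (γ : R2) ρ, jap (x - z) ^ (-t) := by
        rw [Finset.mul_sum]
    _ = (c / V) * ∫ z in ⋃ γ ∈ F, Metric.ball (γ : R2) ρ, jap (x - z) ^ (-t) := by
        rw [integral_biUnion_finset F (fun γ _ => measurableSet_ball) hdisj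
          (fun γ _ => hint.integrableOn)]
    _ ≤ (c / V) * ∫ z : R2, jap (x - z) ^ (-t) := by
        apply mul_le_mul_of_nonneg_left _ (le_of_lt (div_pos hcpos hVpos))
        exact setIntegral_le_integral hint
          (Eventually.of_forall fun z => Real.rpow_nonneg (jap_pos _).le _)
    _ = (c / V) * I := by
        rw [hI, integral_sub_left_eq_self (fun z : R2 => jap z ^ (-t)) volume x]

/-- for an `r`-uniformly discrete set `𝔇 ⊆ ℝ²`, `s > 3/2` and `0 < ε < s - 3/2`,
there is `C > 0` with `∑_{γ∈𝔇} ⟨x-γ⟩^{-(s-1)} ⟨y-γ⟩^{-s} ≤ C ⟨x-y⟩^{-(s-3/2-ε)}` for all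
`x, y ∈ ℝ²`. -/
theorem statement_17
    (𝔇 : Set R2) (r : ℝ) (h𝔇 : UnifDiscrete 𝔇 r)
    (s : ℝ) (hs : 3 / 2 < s) (ε : ℝ) (hε0 : 0 < ε) (hε : ε < s - 3 / 2) :
    ∃ C : ℝ, 0 < C ∧ ∀ x y : R2,
      Summable (fun γ : 𝔇 => jap (x - (γ : R2)) ^ (-(s - 1)) * jap (y - (γ : R2)) ^ (-s)) ∧
      ∑' γ : 𝔇, jap (x - (γ : R2)) ^ (-(s - 1)) * jap (y - (γ : R2)) ^ (-s)
        ≤ C * jap (x - y) ^ (-(s - 3 / 2 - ε)) := by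
  set t : ℝ := 2 + 2 * ε with htdef
  obtain ⟨S, hS0, hS⟩ := uniform_sum_bound h𝔇 (t := t) (by rw [htdef]; linarith)
  set q : ℝ := s - 3 / 2 - ε with hq
  have hq0 : 0 < q := by rw [hq]; linarith
  have hsqnn : (0:ℝ) ≤ Real.sqrt 2 ^ q := Real.rpow_nonneg (Real.sqrt_nonneg 2) q
  set C : ℝ := Real.sqrt 2 ^ q * (2 * S) + 1 with hC
  have hCpos : 0 < C := by
    have : 0 ≤ Real.sqrt 2 ^ q * (2 * S) := mul_nonneg hsqnn (by linarith)
    linarith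
  refine ⟨C, hCpos, fun x y => ?_⟩
  have hpt : ∀ γ : 𝔇, jap (x - (γ : R2)) ^ (-(s - 1)) * jap (y - (γ : R2)) ^ (-s)
      ≤ (Real.sqrt 2 ^ q * jap (x - y) ^ (-q))
        * (jap (x - (γ : R2)) ^ (-t) + jap (y - (γ : R2)) ^ (-t)) := by
    intro γ
    set A := jap (x - (γ : R2)) with hA
    set B := jap (y - (γ : R2)) with hB
    set D := jap (x - y) with hD
    have hA0 : 0 < A := jap_pos _
    have hB0 : 0 < B := jap_pos _
    have hD0 : 0 < D := jap_pos _
    have hPee : D ≤ Real.sqrt 2 * (A * B) := by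
      have hp := peetre (x - (γ : R2)) (y - (γ : R2))
      have hxy : (x - (γ : R2)) - (y - (γ : R2)) = x - y := by abel
      rw [hxy] at hp
      exact hp
    have e1 : A ^ (-(s - 1)) = A ^ (-q) * A ^ (-(1/2 + ε)) := by
      rw [← Real.rpow_add hA0]
      congr 1
      rw [hq]; ring
    have e2 : B ^ (-s) = B ^ (-q) * B ^ (-(3/2 + ε)) := by
      rw [← Real.rpow_add hB0]
      congr 1
      rw [hq]; ring
    have step4 : (A * B) ^ (-q) ≤ Real.sqrt 2 ^ q * D ^ (-q) := by
      have h4a : (Real.sqrt 2 * (A * B)) ^ (-q) ≤ D ^ (-q) :=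
        Real.rpow_le_rpow_of_nonpos hD0 hPee (neg_nonpos.2 hq0.le)
      have h4b : (Real.sqrt 2 * (A * B)) ^ (-q)
          = Real.sqrt 2 ^ (-q) * (A * B) ^ (-q) :=
        Real.mul_rpow (Real.sqrt_nonneg 2) (by positivity)
      have h4c : Real.sqrt 2 ^ q * Real.sqrt 2 ^ (-q) = 1 := by
        rw [← Real.rpow_add (by positivity : (0:ℝ) < Real.sqrt 2)]
        simp
      calc (A * B) ^ (-q) = Real.sqrt 2 ^ q * ((Real.sqrt 2 * (A * B)) ^ (-q)) := by
            rw [h4b, ← mul_assoc, h4c, one_mul]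
        _ ≤ Real.sqrt 2 ^ q * D ^ (-q) := mul_le_mul_of_nonneg_left h4a hsqnn
    have step5 : A ^ (-(1/2 + ε)) * B ^ (-(3/2 + ε)) ≤ A ^ (-t) + B ^ (-t) := by
      have hAt : 0 ≤ A ^ (-t) := Real.rpow_nonneg hA0.le _
      have hBt : 0 ≤ B ^ (-t) := Real.rpow_nonneg hB0.le _
      rcases le_total A B with h | h
      · have : B ^ (-(3/2 + ε)) ≤ A ^ (-(3/2 + ε)) :=
          Real.rpow_le_rpow_of_nonpos hA0 h (by linarith)
        have h5 : A ^ (-(1/2 + ε)) * B ^ (-(3/2 + ε)) ≤ A ^ (-t) := by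
          calc A ^ (-(1/2 + ε)) * B ^ (-(3/2 + ε))
              ≤ A ^ (-(1/2 + ε)) * A ^ (-(3/2 + ε)) :=
                mul_le_mul_of_nonneg_left this (Real.rpow_nonneg hA0.le _)
            _ = A ^ (-t) := by
                rw [← Real.rpow_add hA0]; congr 1; rw [htdef]; ring
        linarith
      · have : A ^ (-(1/2 + ε)) ≤ B ^ (-(1/2 + ε)) :=
          Real.rpow_le_rpow_of_nonpos hB0 h (by linarith)
        have h5 : A ^ (-(1/2 + ε)) * B ^ (-(3/2 + ε)) ≤ B ^ (-t) := by
          calc A ^ (-(1/2 + ε)) * B ^ (-(3/2 + ε))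
              ≤ B ^ (-(1/2 + ε)) * B ^ (-(3/2 + ε)) :=
                mul_le_mul_of_nonneg_right this (Real.rpow_nonneg hB0.le _)
            _ = B ^ (-t) := by
                rw [← Real.rpow_add hB0]; congr 1; rw [htdef]; ring
        linarith
    calc A ^ (-(s - 1)) * B ^ (-s)
        = ((A * B) ^ (-q)) * (A ^ (-(1/2 + ε)) * B ^ (-(3/2 + ε))) := by
          rw [e1, e2, Real.mul_rpow hA0.le hB0.le]; ring
      _ ≤ (Real.sqrt 2 ^ q * D ^ (-q)) * (A ^ (-t) + B ^ (-t)) := by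
          apply mul_le_mul step4 step5 (by positivity) (by positivity)
  have hDqnn : 0 ≤ jap (x - y) ^ (-q) := Real.rpow_nonneg (jap_pos _).le _
  have hfin : ∀ F : Finset 𝔇,
      ∑ γ ∈ F, jap (x - (γ : R2)) ^ (-(s - 1)) * jap (y - (γ : R2)) ^ (-s)
        ≤ C * jap (x - y) ^ (-(s - 3 / 2 - ε)) := by
    intro F
    have h1 : ∑ γ ∈ F, jap (x - (γ : R2)) ^ (-(s - 1)) * jap (y - (γ : R2)) ^ (-s)
        ≤ ∑ γ ∈ F, (Real.sqrt 2 ^ q * jap (x - y) ^ (-q))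
          * (jap (x - (γ : R2)) ^ (-t) + jap (y - (γ : R2)) ^ (-t)) :=
      Finset.sum_le_sum fun γ _ => hpt γ
    have h2 : ∑ γ ∈ F, (Real.sqrt 2 ^ q * jap (x - y) ^ (-q))
          * (jap (x - (γ : R2)) ^ (-t) + jap (y - (γ : R2)) ^ (-t))
        = (Real.sqrt 2 ^ q * jap (x - y) ^ (-q))
          * ((∑ γ ∈ F, jap (x - (γ : R2)) ^ (-t)) + ∑ γ ∈ F, jap (y - (γ : R2)) ^ (-t)) := by
      rw [← Finset.mul_sum, Finset.sum_add_distrib]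
    have h3 : (∑ γ ∈ F, jap (x - (γ : R2)) ^ (-t)) + ∑ γ ∈ F, jap (y - (γ : R2)) ^ (-t)
        ≤ 2 * S := by
      have := hS x F
      have := hS y F
      linarith
    have h4 : (Real.sqrt 2 ^ q * jap (x - y) ^ (-q))
          * ((∑ γ ∈ F, jap (x - (γ : R2)) ^ (-t)) + ∑ γ ∈ F, jap (y - (γ : R2)) ^ (-t))
        ≤ (Real.sqrt 2 ^ q * jap (x - y) ^ (-q)) * (2 * S) :=
      mul_le_mul_of_nonneg_left h3 (mul_nonneg hsqnn hDqnn)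
    have h5 : (Real.sqrt 2 ^ q * jap (x - y) ^ (-q)) * (2 * S)
        ≤ C * jap (x - y) ^ (-(s - 3 / 2 - ε)) := by
      have : -(s - 3/2 - ε) = -q := by rw [hq]
      rw [this, hC]
      have : (Real.sqrt 2 ^ q * jap (x - y) ^ (-q)) * (2 * S)
          = (Real.sqrt 2 ^ q * (2 * S)) * jap (x - y) ^ (-q) := by ring
      rw [this]
      nlinarith [hDqnn]
    linarith
  have hnn : 0 ≤ fun γ : 𝔇 => jap (x - (γ : R2)) ^ (-(s - 1)) * jap (y - (γ : R2)) ^ (-s) := by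
    intro γ
    exact mul_nonneg (Real.rpow_nonneg (jap_pos _).le _) (Real.rpow_nonneg (jap_pos _).le _)
  have hsum := summable_of_sum_le hnn hfin
  exact ⟨hsum, Summable.tsum_le_of_sum_le hsum hfin⟩


end
end
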